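/- Let b, b₃, b₄ > 0 and define G(x) = b₄·F2(√b·x) − b₃·F1(x) for x > 0, where F1(x) = exp(-x²)/erfc(x) and F2(x) = exp(-x²)/erf(x). Then the equation G(x) = x has a unique solution ξ > 0. -/

import Mathlib

open Real Filter Topology Set MeasureTheory intervalIntegral

noncomputable def erf (x : ℝ) : ℝ := (2 / Real.sqrt Real.pi) * ∫ u in (0:ℝ)..x, Real.exp (-u^2)
noncomputable def erfc (x : ℝ) : ℝ := 1 - erf x

lemma exp_negsq_cont : Continuous fun u : ℝ => Real.exp (-u^2) := by
  continuity

lemma exp_negsq_integrable : Integrable (fun u : ℝ => Real.exp (-u^2)) := by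
  have := integrable_exp_neg_mul_sq (b := 1) one_pos
  simpa using this

lemma erf_hasDerivAt (x : ℝ) :
    HasDerivAt erf ((2 / Real.sqrt Real.pi) * Real.exp (-x^2)) x := by
  have h : HasDerivAt (fun y => ∫ u in (0:ℝ)..y, Real.exp (-u^2)) (Real.exp (-x^2)) x :=
    (exp_negsq_cont.integral_hasStrictDerivAt 0 x).hasDerivAt
  exact h.const_mul (2 / Real.sqrt Real.pi)

lemma erf_zero : erf 0 = 0 := by simp [erf]

lemma sqrtpi_pos : 0 < Real.sqrt Real.pi := Real.sqrt_pos.mpr Real.pi_pos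

lemma erf_eq_setInt {x : ℝ} (h : 0 ≤ x) :
    erf x = (2 / Real.sqrt Real.pi) * ∫ u in Ioc 0 x, Real.exp (-u^2) := by
  rw [erf, intervalIntegral.integral_of_le h]

lemma gauss_Ioi : (∫ u in Ioi (0:ℝ), Real.exp (-u^2)) = Real.sqrt Real.pi / 2 := by
  have := integral_gaussian_Ioi 1
  simpa using this

lemma erf_strictMono : StrictMono erf := by
  have : ∀ x : ℝ, 0 < (2 / Real.sqrt Real.pi) * Real.exp (-x^2) := fun x =>
    mul_pos (div_pos two_pos sqrtpi_pos) (Real.exp_pos _)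
  apply strictMono_of_deriv_pos
  intro x
  rw [(erf_hasDerivAt x).deriv]
  exact mul_pos (div_pos two_pos sqrtpi_pos) (Real.exp_pos _)

lemma erf_pos {x : ℝ} (hx : 0 < x) : 0 < erf x := by
  have := erf_strictMono hx
  rwa [erf_zero] at this

lemma erf_lt_one {x : ℝ} (hx : 0 ≤ x) : erf x < 1 := by
  have hIoi : Ioi (0:ℝ) = Ioc 0 x ∪ Ioi x := (Set.Ioc_union_Ioi_eq_Ioi hx).symm
  have hint : (∫ u in Ioi (0:ℝ), Real.exp (-u^2))
      = (∫ u in Ioc (0:ℝ) x, Real.exp (-u^2)) + ∫ u in Ioi x, Real.exp (-u^2) := by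
    rw [hIoi]
    exact MeasureTheory.setIntegral_union (Set.Ioc_disjoint_Ioi le_rfl)
      measurableSet_Ioi exp_negsq_integrable.integrableOn exp_negsq_integrable.integrableOn
  have hpos : 0 < ∫ u in Ioi x, Real.exp (-u^2) := by
    apply MeasureTheory.setIntegral_pos_iff_support_of_nonneg_ae ?_ exp_negsq_integrable.integrableOn |>.mpr
    · simp [Function.support, Real.exp_ne_zero]
    · filter_upwards with u using (Real.exp_pos _).le
  have h1 : erf x = (2 / Real.sqrt Real.pi) * ∫ u in Ioc 0 x, Real.exp (-u^2) := erf_eq_setInt hx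
  have h2 : (2 / Real.sqrt Real.pi) * (Real.sqrt Real.pi / 2) = 1 := by
    field_simp
  nlinarith [gauss_Ioi, div_pos two_pos sqrtpi_pos]

lemma erfc_pos {x : ℝ} (hx : 0 ≤ x) : 0 < erfc x := by
  have := erf_lt_one hx
  simp only [erfc]; linarith

lemma erfc_eq_setInt {x : ℝ} (hx : 0 ≤ x) :
    erfc x = (2 / Real.sqrt Real.pi) * ∫ u in Ioi x, Real.exp (-u^2) := by
  have hIoi : Ioi (0:ℝ) = Ioc 0 x ∪ Ioi x := (Set.Ioc_union_Ioi_eq_Ioi hx).symm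
  have hint : (∫ u in Ioi (0:ℝ), Real.exp (-u^2))
      = (∫ u in Ioc (0:ℝ) x, Real.exp (-u^2)) + ∫ u in Ioi x, Real.exp (-u^2) := by
    rw [hIoi]
    exact MeasureTheory.setIntegral_union (Set.Ioc_disjoint_Ioi le_rfl)
      measurableSet_Ioi exp_negsq_integrable.integrableOn exp_negsq_integrable.integrableOn
  have h2 : (2 / Real.sqrt Real.pi) * (Real.sqrt Real.pi / 2) = 1 := by field_simp
  have key : (2 / Real.sqrt Real.pi) * (∫ u in Ioc (0:ℝ) x, Real.exp (-u^2))
      + (2 / Real.sqrt Real.pi) * ∫ u in Ioi x, Real.exp (-u^2) = 1 := by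
    rw [← mul_add, ← hint, gauss_Ioi]; exact h2
  rw [erfc, erf_eq_setInt hx]
  linarith


lemma mul_exp_integrable : Integrable (fun u : ℝ => u * Real.exp (-u^2)) := by
  have := integrable_mul_exp_neg_mul_sq (b := 1) one_pos
  simpa using this

lemma integral_mul_exp_Ioi (x : ℝ) :
    (∫ u in Ioi x, u * Real.exp (-u^2)) = Real.exp (-x^2) / 2 := by
  have hderiv : ∀ u ∈ Ici x, HasDerivAt (fun u : ℝ => -Real.exp (-u^2) / 2)
      (u * Real.exp (-u^2)) u := by
    intro u _
    have h1 : HasDerivAt (fun u : ℝ => -u^2) (-(2*u)) u := by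
      simpa using ((hasDerivAt_pow 2 u).fun_neg)
    have h2 := (h1.exp).fun_neg.div_const 2
    refine h2.congr_deriv ?_
    ring_nf
  have htend : Tendsto (fun u : ℝ => -Real.exp (-u^2) / 2) atTop (𝓝 0) := by
    have : Tendsto (fun u : ℝ => -u^2) atTop atBot := by
      apply tendsto_neg_atBot_iff.mpr
      exact tendsto_pow_atTop (by norm_num)
    have := (Real.tendsto_exp_atBot.comp this).neg.div_const 2
    simpa using this
  have := MeasureTheory.integral_Ioi_of_hasDerivAt_of_tendsto'
    hderiv mul_exp_integrable.integrableOn htend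
  rw [this]; ring

lemma erfc_bound {x : ℝ} (hx : 0 < x) :
    Real.sqrt Real.pi * x * erfc x ≤ Real.exp (-x^2) := by
  have hmono : (∫ u in Ioi x, Real.exp (-u^2)) ≤ ∫ u in Ioi x, (u/x) * Real.exp (-u^2) := by
    apply MeasureTheory.setIntegral_mono_on exp_negsq_integrable.integrableOn
      ((mul_exp_integrable.div_const x).congr ?_).integrableOn measurableSet_Ioi
    · intro u hu
      have hux : x ≤ u := le_of_lt hu
      have h1 : (1:ℝ) ≤ u / x := (one_le_div hx).mpr hux
      nlinarith [Real.exp_pos (-u^2)]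
    · filter_upwards with u
      ring
  have hval : (∫ u in Ioi x, (u/x) * Real.exp (-u^2)) = Real.exp (-x^2) / (2*x) := by
    have : (∫ u in Ioi x, (u/x) * Real.exp (-u^2))
        = (∫ u in Ioi x, u * Real.exp (-u^2)) / x := by
      rw [← MeasureTheory.integral_div]
      congr 1; funext u; ring
    rw [this, integral_mul_exp_Ioi]; field_simp
  rw [erfc_eq_setInt hx.le]
  have h2 : Real.sqrt Real.pi * x * ((2 / Real.sqrt Real.pi) * ∫ u in Ioi x, Real.exp (-u^2))
      = 2 * x * ∫ u in Ioi x, Real.exp (-u^2) := by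
    field_simp
  rw [h2]
  calc 2 * x * ∫ u in Ioi x, Real.exp (-u^2)
      ≤ 2 * x * (Real.exp (-x^2) / (2*x)) := by
        apply mul_le_mul_of_nonneg_left _ (by positivity)
        rw [← hval]; exact hmono
    _ = Real.exp (-x^2) := by field_simp

section main
variable (b b3 b4 : ℝ)

noncomputable def Hfun : ℝ → ℝ := fun x =>
  b4 * (Real.exp (-(b * x^2)) / erf (Real.sqrt b * x))
    - b3 * (Real.exp (-x^2) / erfc x) - x

lemma Hfun_hasDerivAt (hb : 0 < b) (hb3 : 0 < b3) (hb4 : 0 < b4) {x : ℝ} (hx : 0 < x) :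
    ∃ d : ℝ, d < 0 ∧ HasDerivAt (Hfun b b3 b4) d x := by
  have hsb : 0 < Real.sqrt b := Real.sqrt_pos.mpr hb
  have hsx : 0 < Real.sqrt b * x := mul_pos hsb hx
  have herf : 0 < erf (Real.sqrt b * x) := erf_pos hsx
  have herfc : 0 < erfc x := erfc_pos hx.le
  set s : ℝ := 2 / Real.sqrt Real.pi with hs
  have hspos : 0 < s := div_pos two_pos sqrtpi_pos
  have hsq : (Real.sqrt b * x)^2 = b * x^2 := by
    rw [mul_pow, Real.sq_sqrt hb.le]
  -- derivative of denominator erf (√b x)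
  have d1 : HasDerivAt (fun y => erf (Real.sqrt b * y))
      (s * Real.exp (-(b * x^2)) * Real.sqrt b) x := by
    have hinner : HasDerivAt (fun y : ℝ => Real.sqrt b * y) (Real.sqrt b) x := by
      simpa using (hasDerivAt_id x).const_mul (Real.sqrt b)
    have := (erf_hasDerivAt (Real.sqrt b * x)).comp x hinner
    simpa [hsq, Function.comp_def] using this
  -- derivative of numerator exp (-(b x^2))
  have n1 : HasDerivAt (fun y => Real.exp (-(b * y^2)))
      (Real.exp (-(b * x^2)) * (-(b * (2 * x)))) x := by
    have hinner : HasDerivAt (fun y : ℝ => -(b * y^2)) (-(b * (2 * x))) x := by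
      simpa using ((hasDerivAt_pow 2 x).const_mul b).fun_neg
    simpa using hinner.exp
  have q2 := n1.div d1 herf.ne'
  -- derivative of F1 = exp(-x^2)/erfc x
  have n2 : HasDerivAt (fun y : ℝ => Real.exp (-y^2))
      (Real.exp (-x^2) * (-(2 * x))) x := by
    have hinner : HasDerivAt (fun y : ℝ => -y^2) (-(2 * x)) x := by
      simpa using (hasDerivAt_pow 2 x).fun_neg
    simpa using hinner.exp
  have d2 : HasDerivAt erfc (-(s * Real.exp (-x^2))) x := by
    exact (erf_hasDerivAt x).const_sub 1
  have q1 := n2.div d2 herfc.ne'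
  have hH := ((q2.const_mul b4).sub (q1.const_mul b3)).sub (hasDerivAt_id x)
  refine ⟨_, ?_, by exact hH⟩
  have hq2neg : (Real.exp (-(b * x^2)) * (-(b * (2 * x))) * erf (Real.sqrt b * x)
      - Real.exp (-(b * x^2)) * (s * Real.exp (-(b * x^2)) * Real.sqrt b))
      / erf (Real.sqrt b * x) ^ 2 < 0 := by
    apply div_neg_of_neg_of_pos _ (by positivity)
    have e1 := Real.exp_pos (-(b * x^2))
    have t1 : 0 < Real.exp (-(b * x^2)) * (b * (2 * x)) * erf (Real.sqrt b * x) := by positivity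
    have t2 : 0 < Real.exp (-(b * x^2)) * (s * Real.exp (-(b * x^2)) * Real.sqrt b) := by positivity
    nlinarith
  have hq1nonneg : 0 ≤ (Real.exp (-x^2) * (-(2 * x)) * erfc x
      - Real.exp (-x^2) * -(s * Real.exp (-x^2))) / erfc x ^ 2 := by
    apply div_nonneg _ (by positivity)
    have hkey := erfc_bound hx
    have e1 := Real.exp_pos (-x^2)
    have h2 : 2 * x * erfc x ≤ s * Real.exp (-x^2) := by
      rw [hs, div_mul_eq_mul_div, le_div_iff₀ sqrtpi_pos]
      nlinarith
    nlinarith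
  have t1 := mul_neg_of_pos_of_neg hb4 hq2neg
  have t2 := mul_nonneg hb3.le hq1nonneg
  ring_nf at t1 t2 ⊢
  linarith

lemma Hfun_strictAnti (hb : 0 < b) (hb3 : 0 < b3) (hb4 : 0 < b4) :
    StrictAntiOn (Hfun b b3 b4) (Ioi 0) := by
  apply strictAntiOn_of_deriv_neg (convex_Ioi 0)
  · intro x hx
    obtain ⟨d, _, hH⟩ := Hfun_hasDerivAt b b3 b4 hb hb3 hb4 hx
    exact hH.differentiableAt.continuousAt.continuousWithinAt
  · rw [interior_Ioi]
    intro x hx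
    obtain ⟨d, hd, hH⟩ := Hfun_hasDerivAt b b3 b4 hb hb3 hb4 hx
    rw [hH.deriv]; exact hd

lemma erf_continuous : Continuous erf :=
  Differentiable.continuous (fun x => (erf_hasDerivAt x).differentiableAt)

lemma Hfun_pos_near_zero (hb : 0 < b) (hb3 : 0 < b3) (hb4 : 0 < b4) :
    ∃ a : ℝ, 0 < a ∧ a < 1 ∧ 0 < Hfun b b3 b4 a := by
  have hsb : 0 < Real.sqrt b := Real.sqrt_pos.mpr hb
  have herfc1 : 0 < erfc 1 := erfc_pos (by norm_num)
  set C : ℝ := b3 / erfc 1 + 2 with hC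
  have h1 : Tendsto (fun x : ℝ => erf (Real.sqrt b * x)) (𝓝[>] 0) (𝓝[>] 0) := by
    rw [tendsto_nhdsWithin_iff]
    constructor
    · have hc : Continuous fun x : ℝ => erf (Real.sqrt b * x) :=
        erf_continuous.comp (continuous_const.mul continuous_id)
      exact (hc.tendsto' 0 0 (by simp [erf_zero])).mono_left nhdsWithin_le_nhds
    · filter_upwards [eventually_mem_nhdsWithin] with x hx
      exact erf_pos (mul_pos hsb hx)
  have h2 : Tendsto (fun x : ℝ => (erf (Real.sqrt b * x))⁻¹) (𝓝[>] 0) atTop :=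
    tendsto_inv_nhdsGT_zero.comp h1
  have h3 : Tendsto (fun x : ℝ => b4 * Real.exp (-(b * x^2))) (𝓝[>] 0) (𝓝 b4) := by
    have hc : Continuous fun x : ℝ => b4 * Real.exp (-(b * x^2)) := by continuity
    exact (hc.tendsto' 0 b4 (by simp)).mono_left nhdsWithin_le_nhds
  have h4 := h3.pos_mul_atTop hb4 h2
  have ev1 := h4.eventually_ge_atTop C
  have ev2 : ∀ᶠ x : ℝ in 𝓝[>] 0, x < 1 := by
    have : Ioo (0:ℝ) 1 ∈ 𝓝[>] (0:ℝ) :=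
      Ioo_mem_nhdsGT_of_mem (by constructor <;> norm_num)
    filter_upwards [this] with x hx using hx.2
  obtain ⟨a, hC', ha1, ha0⟩ := (ev1.and (ev2.and eventually_mem_nhdsWithin)).exists
  refine ⟨a, ha0, ha1, ?_⟩
  have herfca : 0 < erfc a := erfc_pos ha0.le
  have hF1 : Real.exp (-a^2) / erfc a ≤ 1 / erfc 1 := by
    apply div_le_div₀ (by norm_num) (Real.exp_le_one_iff.mpr (by nlinarith)) herfc1
    have : erf a ≤ erf 1 := erf_strictMono.monotone ha1.le
    simp only [erfc]; linarith
  have hterm1 : C ≤ b4 * (Real.exp (-(b * a^2)) / erf (Real.sqrt b * a)) := by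
    calc C ≤ b4 * Real.exp (-(b * a^2)) * (erf (Real.sqrt b * a))⁻¹ := hC'
    _ = b4 * (Real.exp (-(b * a^2)) / erf (Real.sqrt b * a)) := by
        rw [mul_assoc, ← div_eq_mul_inv]
  have hterm2 : b3 * (Real.exp (-a^2) / erfc a) ≤ b3 / erfc 1 := by
    calc b3 * (Real.exp (-a^2) / erfc a) ≤ b3 * (1 / erfc 1) :=
      mul_le_mul_of_nonneg_left hF1 hb3.le
    _ = b3 / erfc 1 := by ring
  simp only [Hfun]
  linarith

lemma Hfun_neg_far (hb : 0 < b) (hb3 : 0 < b3) (hb4 : 0 < b4) :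
    ∃ c : ℝ, 1 < c ∧ Hfun b b3 b4 c < 0 := by
  have hsb : 0 < Real.sqrt b := Real.sqrt_pos.mpr hb
  have herfb : 0 < erf (Real.sqrt b) := erf_pos hsb
  have hdiv : 0 < b4 / erf (Real.sqrt b) := div_pos hb4 herfb
  set c : ℝ := b4 / erf (Real.sqrt b) + 2 with hc
  have hc1 : 1 < c := by rw [hc]; linarith
  have hc0 : 0 < c := by linarith
  refine ⟨c, hc1, ?_⟩
  have herfc : 0 < erf (Real.sqrt b * c) := erf_pos (mul_pos hsb hc0)
  have hterm1 : b4 * (Real.exp (-(b * c^2)) / erf (Real.sqrt b * c))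
      ≤ b4 / erf (Real.sqrt b) := by
    have h1 : Real.exp (-(b * c^2)) ≤ 1 := Real.exp_le_one_iff.mpr (by nlinarith)
    have h2 : erf (Real.sqrt b) ≤ erf (Real.sqrt b * c) := by
      apply erf_strictMono.monotone
      nlinarith
    calc b4 * (Real.exp (-(b * c^2)) / erf (Real.sqrt b * c))
        ≤ b4 * (1 / erf (Real.sqrt b)) :=
          mul_le_mul_of_nonneg_left (div_le_div₀ (by norm_num) h1 herfb h2) hb4.le
      _ = b4 / erf (Real.sqrt b) := by ring
  have hterm2 : 0 ≤ b3 * (Real.exp (-c^2) / erfc c) := by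
    have := erfc_pos hc0.le
    positivity
  simp only [Hfun]
  linarith

end main

theorem G_unique_fixed_point (b b3 b4 : ℝ) (hb : 0 < b) (hb3 : 0 < b3) (hb4 : 0 < b4) :
    ∃! x : ℝ, 0 < x ∧
      b4 * (Real.exp (-(b * x^2)) / erf (Real.sqrt b * x))
        - b3 * (Real.exp (-x^2) / erfc x) = x := by
  obtain ⟨a, ha0, ha1, haH⟩ := Hfun_pos_near_zero b b3 b4 hb hb3 hb4
  obtain ⟨c, hc1, hcH⟩ := Hfun_neg_far b b3 b4 hb hb3 hb4
  have hac : a < c := ha1.trans hc1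
  have hanti := Hfun_strictAnti b b3 b4 hb hb3 hb4
  have hcont : ContinuousOn (Hfun b b3 b4) (Icc a c) := by
    intro x hx
    have hx0 : 0 < x := lt_of_lt_of_le ha0 hx.1
    obtain ⟨d, _, hH⟩ := Hfun_hasDerivAt b b3 b4 hb hb3 hb4 hx0
    exact hH.differentiableAt.continuousAt.continuousWithinAt
  have hIVT := intermediate_value_Icc' hac.le hcont
  have h0mem : (0:ℝ) ∈ Icc (Hfun b b3 b4 c) (Hfun b b3 b4 a) := ⟨hcH.le, haH.le⟩
  obtain ⟨ξ, hξmem, hξ⟩ := hIVT h0mem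
  have hξ0 : 0 < ξ := lt_of_lt_of_le ha0 hξmem.1
  refine ⟨ξ, ⟨hξ0, ?_⟩, ?_⟩
  · have : Hfun b b3 b4 ξ = 0 := hξ
    simp only [Hfun] at this
    linarith
  · rintro y ⟨hy0, hy⟩
    have hyH : Hfun b b3 b4 y = 0 := by simp only [Hfun]; linarith
    have hξH : Hfun b b3 b4 ξ = 0 := hξ
    exact hanti.injOn hy0 hξ0 (by rw [hyH, hξH])
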